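/- Set g₀ := −f and assume (†): for each i = 1,…,n exactly one of the coefficients (g₀)_{d,i}, (g₁)_{d,i}, …, (g_m)_{d,i} is strictly negative. Let A := I, the identity matrix of size m+1 (so h_k = g_k for k = 0,…,m). If, in addition, Δ(−g_j) ∩ Δ(−g_k) = ∅ for all 0 ≤ j < k ≤ m and g_k(0) ≥ 0 for k = 1,…,m, then f^I_{gp,g} = s₀(f,g) := sup{G(λ)_gp : λ ∈ (0,∞)^m} (as elements of ℝ ∪ {±∞}). -/
import Mathlib


open MvPolynomial Finset

noncomputable section

/-- `Finset.filter` with classical decidability. -/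
def pfilter {β : Type*} (s : Finset β) (q : β → Prop) : Finset β :=
  @Finset.filter β q (fun _ => Classical.propDecidable _) s

/-- `|α| := α₁ + ⋯ + αₙ` for a multi-index `α`. -/
def adeg {n : ℕ} (α : Fin n →₀ ℕ) : ℕ := ∑ i, α i

/-- `Ω(p) := {α : |α| ≤ d, p_α ≠ 0, α ∉ {0, ε₁, …, εₙ}}`. -/
def OmegaSet {n : ℕ} (d : ℕ) (p : MvPolynomial (Fin n) ℝ) : Finset (Fin n →₀ ℕ) :=
  pfilter p.support (fun α => adeg α ≤ d ∧ α ≠ 0 ∧ ∀ i, α ≠ Finsupp.single i d)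

/-- `Δ(p) := {α ∈ Ω(p) : p_α x^α is not a square}`. -/
def DelSet {n : ℕ} (d : ℕ) (p : MvPolynomial (Fin n) ℝ) : Finset (Fin n →₀ ℕ) :=
  pfilter (OmegaSet d p)
    (fun α => ¬ IsSquare ((monomial α (p.coeff α)) : MvPolynomial (Fin n) ℝ))

/-- Feasibility for program (lw) for `p`. -/
def LwFeas {n : ℕ} (d : ℕ) (p : MvPolynomial (Fin n) ℝ)
    (z : (Fin n →₀ ℕ) → Fin n → ℝ) : Prop :=
  (∀ α ∈ DelSet d p, ∀ i, 0 ≤ z α i ∧ (z α i = 0 ↔ α i = 0)) ∧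
  (∀ i, ∑ α ∈ DelSet d p, z α i ≤ p.coeff (Finsupp.single i d)) ∧
  (∀ α ∈ DelSet d p, adeg α = d →
    ∏ i, (z α i / (α i : ℝ)) ^ (α i) = (p.coeff α / (d : ℝ)) ^ d)

/-- The objective function `v` of program (lw). -/
def lwObj {n : ℕ} (d : ℕ) (p : MvPolynomial (Fin n) ℝ)
    (z : (Fin n →₀ ℕ) → Fin n → ℝ) : ℝ :=
  ∑ α ∈ pfilter (DelSet d p) (fun α => adeg α < d),
    ((d : ℝ) - (adeg α : ℝ)) *
      (((p.coeff α / (d : ℝ)) ^ d * ∏ i, ((α i : ℝ) / z α i) ^ (α i)) ^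
        ((1 : ℝ) / ((d : ℝ) - (adeg α : ℝ))))

/-- `ρ(p) ∈ [0,∞]`, the infimum of `v` over the feasible set (`⊤` if infeasible). -/
def lwRho {n : ℕ} (d : ℕ) (p : MvPolynomial (Fin n) ℝ) : EReal :=
  sInf ((fun z => ((lwObj d p z : ℝ) : EReal)) '' {z | LwFeas d p z})

/-- `p_gp := p(0) − ρ(p) ∈ ℝ ∪ {−∞}`. -/
def lwGp {n : ℕ} (d : ℕ) (p : MvPolynomial (Fin n) ℝ) : EReal :=
  ((eval (0 : Fin n → ℝ) p : ℝ) : EReal) - lwRho d p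

/-- `G(λ) := f − ∑ⱼ λⱼ gⱼ`. -/
def polyG {n m : ℕ} (f : MvPolynomial (Fin n) ℝ) (g : Fin m → MvPolynomial (Fin n) ℝ)
    (lam : Fin m → ℝ) : MvPolynomial (Fin n) ℝ :=
  f - ∑ j, C (lam j) * g j

/-- `s(f,g) := sup{G(λ)_gp : λ ∈ [0,∞)^m}`. -/
def sBound {n m : ℕ} (d : ℕ) (f : MvPolynomial (Fin n) ℝ)
    (g : Fin m → MvPolynomial (Fin n) ℝ) : EReal :=
  sSup ((fun lam => lwGp d (polyG f g lam)) '' {lam : Fin m → ℝ | ∀ j, 0 ≤ lam j})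


/-- `h_k := ∑_{j=0}^m a_{jk} g_j` for `gext = (g₀, g₁, …, g_m)` with `g₀ = −f`. -/
def hpoly {n m : ℕ} (gext : Fin (m+1) → MvPolynomial (Fin n) ℝ)
    (A : Fin (m+1) → Fin (m+1) → ℝ) (k : Fin (m+1)) : MvPolynomial (Fin n) ℝ :=
  ∑ j, C (A j k) * gext j

/-- `μ` extended by `μ₀ := 1`. -/
def muExt {m : ℕ} (mu : Fin m → ℝ) : Fin (m+1) → ℝ := Fin.cons 1 mu

/-- `H(μ) := −∑_{k=0}^m μ_k h_k`. -/
def Hpoly {n m : ℕ} (gext : Fin (m+1) → MvPolynomial (Fin n) ℝ)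
    (A : Fin (m+1) → Fin (m+1) → ℝ) (mu : Fin m → ℝ) : MvPolynomial (Fin n) ℝ :=
  - ∑ k, C (muExt mu k) * hpoly gext A k

/-- `H(μ)_α^+ := −∑_{j : (h_j)_α < 0} (h_j)_α μ_j`. -/
def Hplus {n m : ℕ} (gext : Fin (m+1) → MvPolynomial (Fin n) ℝ)
    (A : Fin (m+1) → Fin (m+1) → ℝ) (mu : Fin m → ℝ) (α : Fin n →₀ ℕ) : ℝ :=
  ∑ j, if (hpoly gext A j).coeff α < 0 then -((hpoly gext A j).coeff α * muExt mu j) else 0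

/-- `H(μ)_α^− := ∑_{j : (h_j)_α > 0} (h_j)_α μ_j`. -/
def Hminus {n m : ℕ} (gext : Fin (m+1) → MvPolynomial (Fin n) ℝ)
    (A : Fin (m+1) → Fin (m+1) → ℝ) (mu : Fin m → ℝ) (α : Fin n →₀ ℕ) : ℝ :=
  ∑ j, if 0 < (hpoly gext A j).coeff α then (hpoly gext A j).coeff α * muExt mu j else 0

/-- `Δ := Δ(f) ∪ Δ(−g₁) ∪ ⋯ ∪ Δ(−g_m)` (note `−g₀ = f`). -/
def DelTot2 {n m : ℕ} (d : ℕ) (gext : Fin (m+1) → MvPolynomial (Fin n) ℝ) :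
    Finset (Fin n →₀ ℕ) :=
  Finset.univ.biUnion (fun j : Fin (m+1) => DelSet d (-(gext j)))

/-- Feasibility for program (lw2). -/
def Lw2Feas {n m : ℕ} (d : ℕ) (gext : Fin (m+1) → MvPolynomial (Fin n) ℝ)
    (A : Fin (m+1) → Fin (m+1) → ℝ)
    (z : (Fin n →₀ ℕ) → Fin n → ℝ) (w : (Fin n →₀ ℕ) → ℝ) (mu : Fin m → ℝ) : Prop :=
  (∀ j, 0 < mu j) ∧
  (∀ α ∈ DelTot2 d gext, ∀ i, 0 ≤ z α i ∧ (z α i = 0 ↔ α i = 0)) ∧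
  (∀ α ∈ DelTot2 d gext, 0 < w α) ∧
  (∀ i, ∑ α ∈ DelTot2 d gext, z α i ≤ (Hpoly gext A mu).coeff (Finsupp.single i d)) ∧
  (∀ α ∈ DelTot2 d gext, adeg α = d →
    (w α / (d : ℝ)) ^ d ≤ ∏ i, (z α i / (α i : ℝ)) ^ (α i)) ∧
  (∀ α ∈ DelTot2 d gext, max (Hplus gext A mu α) (Hminus gext A mu α) ≤ w α) ∧
  (∀ j : Fin (m+1), j ≠ 0 → 0 ≤ ∑ k, A j k * muExt mu k)

/-- The objective function `t` of program (lw2). -/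
def lw2Obj {n m : ℕ} (d : ℕ) (gext : Fin (m+1) → MvPolynomial (Fin n) ℝ)
    (A : Fin (m+1) → Fin (m+1) → ℝ)
    (z : (Fin n →₀ ℕ) → Fin n → ℝ) (w : (Fin n →₀ ℕ) → ℝ) (mu : Fin m → ℝ) : ℝ :=
  (∑ j : Fin m, mu j * max (eval (0 : Fin n → ℝ) (hpoly gext A j.succ)) 0) +
  ∑ α ∈ pfilter (DelTot2 d gext) (fun α => adeg α < d),
    ((d : ℝ) - (adeg α : ℝ)) *
      (((w α / (d : ℝ)) ^ d * ∏ i, ((α i : ℝ) / z α i) ^ (α i)) ^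
        ((1 : ℝ) / ((d : ℝ) - (adeg α : ℝ))))

/-- `ρ_A ∈ [0,∞]`, the optimal value of program (lw2) (`⊤` if infeasible). -/
def rhoA {n m : ℕ} (d : ℕ) (gext : Fin (m+1) → MvPolynomial (Fin n) ℝ)
    (A : Fin (m+1) → Fin (m+1) → ℝ) : EReal :=
  sInf ((fun t : ((Fin n →₀ ℕ) → Fin n → ℝ) × ((Fin n →₀ ℕ) → ℝ) × (Fin m → ℝ) =>
      ((lw2Obj d gext A t.1 t.2.1 t.2.2 : ℝ) : EReal)) ''
    {t | Lw2Feas d gext A t.1 t.2.1 t.2.2})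

/-- `f^A_{gp,g} := −h₀(0) − ρ_A ∈ ℝ ∪ {−∞}`. -/
def fAgp {n m : ℕ} (d : ℕ) (gext : Fin (m+1) → MvPolynomial (Fin n) ℝ)
    (A : Fin (m+1) → Fin (m+1) → ℝ) : EReal :=
  ((-(eval (0 : Fin n → ℝ) (hpoly gext A 0)) : ℝ) : EReal) - rhoA d gext A

lemma mem_pfilter {β : Type*} {s : Finset β} {q : β → Prop} {a : β} :
    a ∈ pfilter s q ↔ a ∈ s ∧ q a := by
  unfold pfilter
  exact @Finset.mem_filter β q (fun _ => Classical.propDecidable _) s a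

-- EReal helper
lemma sub_sInf_le {ι : Type*} (c : ℝ) (L : EReal) (F : ι → ℝ) (S : Set ι)
    (h0 : ∀ x ∈ S, 0 ≤ F x)
    (h : ∀ x ∈ S, ((c - F x : ℝ) : EReal) ≤ L) :
    (c : EReal) - sInf ((fun x => ((F x : ℝ) : EReal)) '' S) ≤ L := by
  rcases S.eq_empty_or_nonempty with hS | ⟨x0, hx0⟩
  · simp [hS]
  · set I := sInf ((fun x => ((F x : ℝ) : EReal)) '' S) with hI
    have hIbot : (0 : EReal) ≤ I := le_sInf (by rintro _ ⟨x, hx, rfl⟩; simpa using EReal.coe_le_coe_iff.mpr (h0 x hx))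
    have hItop : I ≤ ((F x0 : ℝ) : EReal) := sInf_le ⟨x0, hx0, rfl⟩
    have hneb : I ≠ ⊥ := fun hb => by simp [hb] at hIbot
    have hnet : I ≠ ⊤ := fun ht => by rw [ht] at hItop; exact (EReal.coe_lt_top _).not_ge hItop
    rw [← EReal.coe_toReal hnet hneb, ← EReal.coe_sub]
    rw [← EReal.ge_of_forall_gt_iff_ge]
    intro u hu
    have hru : (I : EReal) < ((c - u : ℝ) : EReal) := by
      rw [← EReal.coe_toReal hnet hneb]
      exact_mod_cast by linarith [show (u : ℝ) < c - I.toReal from by exact_mod_cast hu]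
    obtain ⟨e, ⟨x, hx, rfl⟩, he⟩ := sInf_lt_iff.mp hru
    have : F x < c - u := by simpa using EReal.coe_lt_coe_iff.mp he
    calc (u : EReal) ≤ ((c - F x : ℝ) : EReal) := by exact_mod_cast by linarith
      _ ≤ L := h x hx


section Lemmas

variable {n m : ℕ}

lemma mem_DelSet {d : ℕ} {p : MvPolynomial (Fin n) ℝ} {α : Fin n →₀ ℕ} :
    α ∈ DelSet d p ↔ (p.coeff α ≠ 0 ∧ adeg α ≤ d ∧ α ≠ 0 ∧ (∀ i, α ≠ Finsupp.single i d)) ∧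
      ¬ IsSquare ((monomial α (p.coeff α)) : MvPolynomial (Fin n) ℝ) := by
  rw [DelSet, mem_pfilter, OmegaSet, mem_pfilter, mem_support_iff]

lemma isSquare_C_mul {t : ℝ} (ht : 0 < t) {q : MvPolynomial (Fin n) ℝ}
    (h : IsSquare q) : IsSquare (C t * q) := by
  obtain ⟨r, rfl⟩ := h
  have hc : (C t : MvPolynomial (Fin n) ℝ) = C (Real.sqrt t) * C (Real.sqrt t) := by
    rw [← C_mul, Real.mul_self_sqrt ht.le]
  exact ⟨C (Real.sqrt t) * r, by rw [hc]; ring⟩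

lemma isSquare_C_mul_iff {t : ℝ} (ht : 0 < t) {q : MvPolynomial (Fin n) ℝ} :
    IsSquare (C t * q) ↔ IsSquare q := by
  refine ⟨fun h => ?_, isSquare_C_mul ht⟩
  have := isSquare_C_mul (t := t⁻¹) (by positivity) h
  rwa [← mul_assoc, ← C_mul, inv_mul_cancel₀ ht.ne', C_1, one_mul] at this

lemma muExt_pos {mu : Fin m → ℝ} (hmu : ∀ j, 0 < mu j) : ∀ k, 0 < muExt mu k := by
  intro k
  refine Fin.cases ?_ ?_ k
  · simp [muExt]
  · intro j; simpa [muExt] using hmu j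

lemma hpoly_id (gext : Fin (m+1) → MvPolynomial (Fin n) ℝ) (k : Fin (m+1)) :
    hpoly gext (fun j k => if j = k then 1 else 0) k = gext k := by
  rw [hpoly]
  rw [Finset.sum_eq_single k (fun j _ hj => by simp [hj]) (by simp)]
  simp

lemma Hpoly_eq_polyG (f : MvPolynomial (Fin n) ℝ) (g : Fin m → MvPolynomial (Fin n) ℝ)
    (mu : Fin m → ℝ) :
    Hpoly (Fin.cons (-f) g) (fun j k => if j = k then 1 else 0) mu = polyG f g mu := by
  rw [Hpoly, polyG]
  simp only [hpoly_id]
  rw [Fin.sum_univ_succ]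
  simp [muExt, Fin.cons_succ, Fin.cons_zero]
  ring

end Lemmas

section Main

variable {n m : ℕ} {d : ℕ}

lemma exists_unique_support {gext : Fin (m+1) → MvPolynomial (Fin n) ℝ}
    (hO : ∀ j, OmegaSet d (-(gext j)) = DelSet d (-(gext j)))
    (hdisj : ∀ j k : Fin (m+1), j < k → DelSet d (-(gext j)) ∩ DelSet d (-(gext k)) = ∅)
    {α : Fin n →₀ ℕ} (hα : α ∈ DelTot2 d gext) :
    ∃ j₀, α ∈ DelSet d (-(gext j₀)) ∧ ∀ j, j ≠ j₀ → (gext j).coeff α = 0 := by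
  rw [DelTot2, Finset.mem_biUnion] at hα
  obtain ⟨j₀, -, hj₀⟩ := hα
  refine ⟨j₀, hj₀, fun j hj => ?_⟩
  by_contra hc
  have hmem : α ∈ DelSet d (-(gext j)) := by
    rw [← hO, OmegaSet, mem_pfilter, mem_support_iff]
    have h0 := mem_DelSet.mp hj₀
    exact ⟨by simpa using hc, h0.1.2⟩
  rcases lt_or_gt_of_ne hj with h | h
  · have h2 : α ∈ DelSet d (-(gext j)) ∩ DelSet d (-(gext j₀)) :=
      Finset.mem_inter.mpr ⟨hmem, hj₀⟩
    simp [hdisj j j₀ h] at h2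
  · have h2 : α ∈ DelSet d (-(gext j₀)) ∩ DelSet d (-(gext j)) :=
      Finset.mem_inter.mpr ⟨hj₀, hmem⟩
    simp [hdisj j₀ j h] at h2

lemma coeff_polyG_eq {f : MvPolynomial (Fin n) ℝ} {g : Fin m → MvPolynomial (Fin n) ℝ}
    (mu : Fin m → ℝ) {α : Fin n →₀ ℕ} {j₀ : Fin (m+1)}
    (hz : ∀ j, j ≠ j₀ → ((Fin.cons (-f) g : Fin (m+1) → MvPolynomial (Fin n) ℝ) j).coeff α = 0) :
    (polyG f g mu).coeff α
      = muExt mu j₀ * ((-((Fin.cons (-f) g : Fin (m+1) → MvPolynomial (Fin n) ℝ) j₀)).coeff α) := by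
  rw [← Hpoly_eq_polyG, Hpoly]
  simp only [hpoly_id, coeff_neg, MvPolynomial.coeff_sum, coeff_C_mul]
  rw [Finset.sum_eq_single j₀ (fun j _ hj => by rw [hz j hj]; ring) (by simp)]
  ring

lemma max_Hpm {gext : Fin (m+1) → MvPolynomial (Fin n) ℝ}
    (mu : Fin m → ℝ) {α : Fin n →₀ ℕ} {j₀ : Fin (m+1)}
    (hz : ∀ j, j ≠ j₀ → (gext j).coeff α = 0) (hpos : 0 < muExt mu j₀) :
    max (Hplus gext (fun j k => if j = k then 1 else 0) mu α)
        (Hminus gext (fun j k => if j = k then 1 else 0) mu α)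
      = |muExt mu j₀ * (gext j₀).coeff α| := by
  have hp : Hplus gext (fun j k => if j = k then 1 else 0) mu α
      = if (gext j₀).coeff α < 0 then -((gext j₀).coeff α * muExt mu j₀) else 0 := by
    rw [Hplus]
    simp only [hpoly_id]
    exact Finset.sum_eq_single j₀ (fun j _ hj => by rw [hz j hj]; simp) (by simp)
  have hm : Hminus gext (fun j k => if j = k then 1 else 0) mu α
      = if 0 < (gext j₀).coeff α then (gext j₀).coeff α * muExt mu j₀ else 0 := by
    rw [Hminus]
    simp only [hpoly_id]
    exact Finset.sum_eq_single j₀ (fun j _ hj => by rw [hz j hj]; simp) (by simp)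
  rw [hp, hm]
  rcases lt_trichotomy ((gext j₀).coeff α) 0 with hc | hc | hc
  · rw [if_pos hc, if_neg (by linarith)]
    rw [abs_of_neg (by nlinarith), max_eq_left (by nlinarith)]
    ring
  · simp [hc]
  · rw [if_neg (by linarith), if_pos hc]
    rw [abs_of_pos (by nlinarith), max_eq_right (by nlinarith)]
    ring

lemma DelSet_polyG {f : MvPolynomial (Fin n) ℝ} {g : Fin m → MvPolynomial (Fin n) ℝ}
    {mu : Fin m → ℝ} (hmu : ∀ j, 0 < mu j)
    (hO : ∀ j, OmegaSet d (-(Fin.cons (-f) g : Fin (m+1) → MvPolynomial (Fin n) ℝ) j)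
      = DelSet d (-(Fin.cons (-f) g : Fin (m+1) → MvPolynomial (Fin n) ℝ) j))
    (hdisj : ∀ j k : Fin (m+1), j < k →
      DelSet d (-(Fin.cons (-f) g : Fin (m+1) → MvPolynomial (Fin n) ℝ) j)
        ∩ DelSet d (-(Fin.cons (-f) g : Fin (m+1) → MvPolynomial (Fin n) ℝ) k) = ∅) :
    DelSet d (polyG f g mu) = DelTot2 d (Fin.cons (-f) g) := by
  set gext : Fin (m+1) → MvPolynomial (Fin n) ℝ := Fin.cons (-f) g with hg
  ext α
  constructor
  · intro hα
    obtain ⟨⟨hne, hdeg, h0, hsing⟩, -⟩ := mem_DelSet.mp hα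
    have : ∃ j, (gext j).coeff α ≠ 0 := by
      by_contra hc
      push_neg at hc
      have : (polyG f g mu).coeff α = 0 := by
        rw [← Hpoly_eq_polyG, Hpoly]
        simp only [hpoly_id, coeff_neg, MvPolynomial.coeff_sum, coeff_C_mul, ← hg]
        simp [hc]
      exact hne this
    obtain ⟨j, hj⟩ := this
    rw [DelTot2, Finset.mem_biUnion]
    refine ⟨j, Finset.mem_univ j, ?_⟩
    rw [← hO, OmegaSet, mem_pfilter, mem_support_iff]
    exact ⟨by simpa using hj, hdeg, h0, hsing⟩
  · intro hα
    obtain ⟨j₀, hj₀, hz⟩ := exists_unique_support hO hdisj hα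
    obtain ⟨⟨hne, hdeg, h0, hsing⟩, hnsq⟩ := mem_DelSet.mp hj₀
    have hμ : 0 < muExt mu j₀ := muExt_pos hmu j₀
    have hco : (polyG f g mu).coeff α = muExt mu j₀ * ((-(gext j₀)).coeff α) :=
      coeff_polyG_eq mu hz
    rw [mem_DelSet]
    refine ⟨⟨by rw [hco]; exact mul_ne_zero hμ.ne' hne, hdeg, h0, hsing⟩, ?_⟩
    rw [hco, ← C_mul_monomial]
    rwa [isSquare_C_mul_iff hμ]

end Main

section Analytic

variable {n m : ℕ} {d : ℕ}

lemma prod_div_pos {α : Fin n →₀ ℕ} {zz : Fin n → ℝ}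
    (hz : ∀ i, 0 ≤ zz i ∧ (zz i = 0 ↔ α i = 0)) :
    0 < ∏ i, (zz i / (α i : ℝ)) ^ (α i) := by
  apply Finset.prod_pos
  intro i _
  rcases Nat.eq_zero_or_pos (α i) with h | h
  · simp [h]
  · have hzi : 0 < zz i := lt_of_le_of_ne (hz i).1
      (fun e => by have := (hz i).2.mp e.symm; omega)
    exact pow_pos (div_pos hzi (by exact_mod_cast h)) _

lemma prod_div_nonneg {α : Fin n →₀ ℕ} {zz : Fin n → ℝ} (hz : ∀ i, 0 ≤ zz i) :
    0 ≤ ∏ i, ((α i : ℝ) / zz i) ^ (α i) :=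
  Finset.prod_nonneg fun i _ => pow_nonneg (div_nonneg (Nat.cast_nonneg _) (hz i)) _

lemma scale_prod {α : Fin n →₀ ℕ} (zz : Fin n → ℝ) (θ : ℝ) :
    ∏ i, (θ * zz i / (α i : ℝ)) ^ (α i)
      = θ ^ (adeg α) * ∏ i, (zz i / (α i : ℝ)) ^ (α i) := by
  rw [adeg, ← Finset.prod_pow_eq_pow_sum, ← Finset.prod_mul_distrib]
  apply Finset.prod_congr rfl
  intro i _
  rw [mul_div_assoc, mul_pow]

lemma rpow_inv_d_pow {x : ℝ} (hx : 0 ≤ x) (hd : d ≠ 0) :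
    (x ^ ((1 : ℝ)/(d : ℝ))) ^ d = x := by
  rw [← Real.rpow_natCast (x ^ ((1 : ℝ)/(d : ℝ))) d, ← Real.rpow_mul hx]
  rw [one_div, inv_mul_cancel₀ (by exact_mod_cast hd), Real.rpow_one]

lemma lwObj_nonneg (hde : Even d) {p : MvPolynomial (Fin n) ℝ}
    {z : (Fin n →₀ ℕ) → Fin n → ℝ} (hz : LwFeas d p z) : 0 ≤ lwObj d p z := by
  apply Finset.sum_nonneg
  intro α hα
  rw [mem_pfilter] at hα
  have hzα := hz.1 α hα.1
  have h1 : (0:ℝ) ≤ (d:ℝ) - (adeg α : ℝ) := by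
    have := hα.2
    have : (adeg α : ℝ) ≤ (d : ℝ) := by exact_mod_cast this.le
    linarith
  exact mul_nonneg h1 (Real.rpow_nonneg
    (mul_nonneg (hde.pow_nonneg _) (prod_div_nonneg fun i => (hzα i).1)) _)

lemma lw2Obj_nonneg (hde : Even d) {gext : Fin (m+1) → MvPolynomial (Fin n) ℝ}
    {A : Fin (m+1) → Fin (m+1) → ℝ} {z : (Fin n →₀ ℕ) → Fin n → ℝ}
    {w : (Fin n →₀ ℕ) → ℝ} {mu : Fin m → ℝ}
    (hfeas : Lw2Feas d gext A z w mu) : 0 ≤ lw2Obj d gext A z w mu := by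
  apply add_nonneg
  · exact Finset.sum_nonneg fun j _ =>
      mul_nonneg (hfeas.1 j).le (le_max_right _ _)
  · apply Finset.sum_nonneg
    intro α hα
    rw [mem_pfilter] at hα
    have hzα := hfeas.2.1 α hα.1
    have h1 : (0:ℝ) ≤ (d:ℝ) - (adeg α : ℝ) := by
      have : (adeg α : ℝ) ≤ (d : ℝ) := by exact_mod_cast hα.2.le
      linarith
    exact mul_nonneg h1 (Real.rpow_nonneg
      (mul_nonneg (hde.pow_nonneg _) (prod_div_nonneg fun i => (hzα i).1)) _)

lemma abs_coeff_eq_max {f : MvPolynomial (Fin n) ℝ} {g : Fin m → MvPolynomial (Fin n) ℝ}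
    {mu : Fin m → ℝ} (hmu : ∀ j, 0 < mu j)
    (hO : ∀ j, OmegaSet d (-(Fin.cons (-f) g : Fin (m+1) → MvPolynomial (Fin n) ℝ) j)
      = DelSet d (-(Fin.cons (-f) g : Fin (m+1) → MvPolynomial (Fin n) ℝ) j))
    (hdisj : ∀ j k : Fin (m+1), j < k →
      DelSet d (-(Fin.cons (-f) g : Fin (m+1) → MvPolynomial (Fin n) ℝ) j)
        ∩ DelSet d (-(Fin.cons (-f) g : Fin (m+1) → MvPolynomial (Fin n) ℝ) k) = ∅)
    {α : Fin n →₀ ℕ} (hα : α ∈ DelTot2 d (Fin.cons (-f) g)) :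
    max (Hplus (Fin.cons (-f) g) (fun j k => if j = k then 1 else 0) mu α)
        (Hminus (Fin.cons (-f) g) (fun j k => if j = k then 1 else 0) mu α)
      = |(polyG f g mu).coeff α| := by
  obtain ⟨j₀, hj₀, hz⟩ := exists_unique_support hO hdisj hα
  rw [max_Hpm mu hz (muExt_pos hmu j₀), coeff_polyG_eq mu hz, coeff_neg, mul_neg, abs_neg]

end Analytic

section Transfer

variable {n m : ℕ} {d : ℕ} {f : MvPolynomial (Fin n) ℝ} {g : Fin m → MvPolynomial (Fin n) ℝ}

lemma even_pow_div_eq {c wv : ℝ} (hde : Even d) (hd0 : (0:ℝ) < d) (hcw : |c| ≤ wv) :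
    (c / (d:ℝ)) ^ d ≤ (wv / (d:ℝ)) ^ d := by
  rw [← hde.pow_abs (c / (d:ℝ)), abs_div, abs_of_pos hd0]
  exact pow_le_pow_left₀ (div_nonneg (abs_nonneg _) hd0.le)
    ((div_le_div_iff_of_pos_right hd0).mpr hcw) _

lemma abs_pow_div_eq {c : ℝ} (hde : Even d) :
    (|c| / (d:ℝ)) ^ d = (c / (d:ℝ)) ^ d := by
  rw [div_pow, div_pow, hde.pow_abs]

lemma dirB {lam : Fin m → ℝ} (hlam : ∀ j, 0 < lam j) (hde : Even d) (hd2 : 2 ≤ d)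
    (hO : ∀ j, OmegaSet d (-(Fin.cons (-f) g : Fin (m+1) → MvPolynomial (Fin n) ℝ) j)
      = DelSet d (-(Fin.cons (-f) g : Fin (m+1) → MvPolynomial (Fin n) ℝ) j))
    (hdisj : ∀ j k : Fin (m+1), j < k →
      DelSet d (-(Fin.cons (-f) g : Fin (m+1) → MvPolynomial (Fin n) ℝ) j)
        ∩ DelSet d (-(Fin.cons (-f) g : Fin (m+1) → MvPolynomial (Fin n) ℝ) k) = ∅)
    (hg0 : ∀ k : Fin (m+1), k ≠ 0 →
      0 ≤ eval (0 : Fin n → ℝ) ((Fin.cons (-f) g : Fin (m+1) → MvPolynomial (Fin n) ℝ) k))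
    {z : (Fin n →₀ ℕ) → Fin n → ℝ} (hz : LwFeas d (polyG f g lam) z) :
    Lw2Feas d (Fin.cons (-f) g) (fun j k => if j = k then 1 else 0) z
      (fun α => |(polyG f g lam).coeff α|) lam ∧
    lw2Obj d (Fin.cons (-f) g) (fun j k => if j = k then 1 else 0) z
      (fun α => |(polyG f g lam).coeff α|) lam
      = (∑ j, lam j * eval (0 : Fin n → ℝ) (g j)) + lwObj d (polyG f g lam) z := by
  have hΔ : DelSet d (polyG f g lam) = DelTot2 d (Fin.cons (-f) g) :=
    DelSet_polyG hlam hO hdisj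
  have hd0 : (0:ℝ) < d := by exact_mod_cast Nat.lt_of_lt_of_le (by norm_num) hd2
  constructor
  · refine ⟨hlam, ?_, ?_, ?_, ?_, ?_, ?_⟩
    · intro α hα i; exact hz.1 α (hΔ ▸ hα) i
    · intro α hα
      have := mem_DelSet.mp (hΔ ▸ hα : α ∈ DelSet d (polyG f g lam))
      exact abs_pos.mpr this.1.1
    · intro i
      rw [← hΔ, Hpoly_eq_polyG]
      exact hz.2.1 i
    · intro α hα hdeg
      rw [abs_pow_div_eq hde, ← hz.2.2 α (hΔ ▸ hα) hdeg]
    · intro α hα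
      exact le_of_eq (abs_coeff_eq_max hlam hO hdisj hα)
    · intro j _
      have : ∑ k, (if j = k then (1:ℝ) else 0) * muExt lam k = muExt lam j := by
        rw [Finset.sum_eq_single j (fun k _ hk => by simp [Ne.symm hk]) (by simp)]
        simp
      rw [this]
      exact (muExt_pos hlam j).le
  · rw [lw2Obj, lwObj, hΔ]
    congr 1
    · apply Finset.sum_congr rfl
      intro j _
      rw [hpoly_id, Fin.cons_succ,
        max_eq_left (by simpa using hg0 j.succ (Fin.succ_ne_zero j))]
    · apply Finset.sum_congr rfl
      intro α hα
      rw [abs_pow_div_eq hde]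

end Transfer

section DirA

variable {n m : ℕ} {d : ℕ} {f : MvPolynomial (Fin n) ℝ} {g : Fin m → MvPolynomial (Fin n) ℝ}

lemma dirA {mu : Fin m → ℝ} (hmu : ∀ j, 0 < mu j) (hde : Even d) (hd2 : 2 ≤ d)
    (hO : ∀ j, OmegaSet d (-(Fin.cons (-f) g : Fin (m+1) → MvPolynomial (Fin n) ℝ) j)
      = DelSet d (-(Fin.cons (-f) g : Fin (m+1) → MvPolynomial (Fin n) ℝ) j))
    (hdisj : ∀ j k : Fin (m+1), j < k →
      DelSet d (-(Fin.cons (-f) g : Fin (m+1) → MvPolynomial (Fin n) ℝ) j)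
        ∩ DelSet d (-(Fin.cons (-f) g : Fin (m+1) → MvPolynomial (Fin n) ℝ) k) = ∅)
    {z : (Fin n →₀ ℕ) → Fin n → ℝ} {w : (Fin n →₀ ℕ) → ℝ}
    (hfeas : Lw2Feas d (Fin.cons (-f) g) (fun j k => if j = k then 1 else 0) z w mu) :
    ∃ z', LwFeas d (polyG f g mu) z' ∧
      lwObj d (polyG f g mu) z' ≤
        ∑ α ∈ pfilter (DelTot2 d (Fin.cons (-f) g)) (fun α => adeg α < d),
          ((d : ℝ) - (adeg α : ℝ)) *
            (((w α / (d : ℝ)) ^ d * ∏ i, ((α i : ℝ) / z α i) ^ (α i)) ^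
              ((1 : ℝ) / ((d : ℝ) - (adeg α : ℝ)))) := by
  classical
  have hΔ : DelSet d (polyG f g mu) = DelTot2 d (Fin.cons (-f) g) :=
    DelSet_polyG hmu hO hdisj
  have hd0 : (0:ℝ) < d := by exact_mod_cast Nat.lt_of_lt_of_le (by norm_num) hd2
  have hdne : d ≠ 0 := by omega
  obtain ⟨hmupos, hsign, hwpos, hsum, hprod, hmax, hAc⟩ := hfeas
  set p := polyG f g mu with hp
  set Δ := DelTot2 d (Fin.cons (-f) g) with hΔdef
  set P : (Fin n →₀ ℕ) → ℝ := fun α => ∏ i, (z α i / (α i : ℝ)) ^ (α i) with hPdef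
  set θ : (Fin n →₀ ℕ) → ℝ := fun α => ((p.coeff α / (d:ℝ))^d / P α) ^ ((1:ℝ)/(d:ℝ)) with hθdef
  have habs : ∀ α ∈ Δ, |p.coeff α| ≤ w α := fun α hα => by
    rw [← abs_coeff_eq_max hmu hO hdisj hα]; exact hmax α hα
  have hcne : ∀ α ∈ Δ, p.coeff α ≠ 0 := fun α hα => (mem_DelSet.mp (hΔ ▸ hα)).1.1
  have hApos : ∀ α ∈ Δ, 0 < (p.coeff α / (d:ℝ))^d := fun α hα =>
    hde.pow_pos (div_ne_zero (hcne α hα) hd0.ne')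
  have hAw : ∀ α ∈ Δ, (p.coeff α/(d:ℝ))^d ≤ (w α/(d:ℝ))^d := fun α hα =>
    even_pow_div_eq hde hd0 (habs α hα)
  have hPpos : ∀ α ∈ Δ, adeg α = d → 0 < P α := fun α hα _ =>
    prod_div_pos (fun i => hsign α hα i)
  have hAP : ∀ α ∈ Δ, adeg α = d → (p.coeff α/(d:ℝ))^d ≤ P α := fun α hα hdeg =>
    le_trans (hAw α hα) (hprod α hα hdeg)
  have hθpos : ∀ α ∈ Δ, adeg α = d → 0 < θ α := fun α hα hdeg =>
    Real.rpow_pos_of_pos (div_pos (hApos α hα) (hPpos α hα hdeg)) _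
  have hθle1 : ∀ α ∈ Δ, adeg α = d → θ α ≤ 1 := fun α hα hdeg =>
    Real.rpow_le_one (div_nonneg (hApos α hα).le (hPpos α hα hdeg).le)
      ((div_le_one (hPpos α hα hdeg)).mpr (hAP α hα hdeg))
      (by positivity)
  have hθd : ∀ α ∈ Δ, adeg α = d → θ α ^ d * P α = (p.coeff α/(d:ℝ))^d := fun α hα hdeg => by
    rw [hθdef]
    rw [rpow_inv_d_pow (div_nonneg (hApos α hα).le (hPpos α hα hdeg).le) hdne]
    exact div_mul_cancel₀ _ (hPpos α hα hdeg).ne'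
  refine ⟨fun α i => if adeg α = d ∧ α ∈ Δ then θ α * z α i else z α i, ⟨?_, ?_, ?_⟩, ?_⟩
  · intro α hα i
    rw [hΔ] at hα
    by_cases hc : adeg α = d ∧ α ∈ Δ
    · simp only [if_pos hc]
      have hθp := hθpos α hα hc.1
      refine ⟨mul_nonneg hθp.le (hsign α hα i).1, ?_, ?_⟩
      · intro h
        rcases mul_eq_zero.mp h with h | h
        · exact absurd h hθp.ne'
        · exact (hsign α hα i).2.mp h
      · intro h
        rw [(hsign α hα i).2.mpr h, mul_zero]
    · simp only [if_neg hc]; exact hsign α hα i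
  · intro i
    rw [hΔ]
    simp only []
    have hle : ∑ α ∈ Δ, (if adeg α = d ∧ α ∈ Δ then θ α * z α i else z α i)
        ≤ ∑ α ∈ Δ, z α i := by
      apply Finset.sum_le_sum
      intro α hα
      by_cases hc : adeg α = d ∧ α ∈ Δ
      · simp only [if_pos hc]
        exact mul_le_of_le_one_left (hsign α hα i).1 (hθle1 α hα hc.1)
      · simp only [if_neg hc]
        exact le_refl _
    refine le_trans hle ?_
    have := hsum i
    rwa [Hpoly_eq_polyG, ← hp] at this
  · intro α hα hdeg
    rw [hΔ] at hα
    have hc : adeg α = d ∧ α ∈ Δ := ⟨hdeg, hα⟩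
    simp only [if_pos hc]
    rw [scale_prod, hdeg]
    exact hθd α hα hdeg
  · rw [lwObj, hΔ]
    apply Finset.sum_le_sum
    intro α hα
    rw [mem_pfilter] at hα
    have hcond : ¬(adeg α = d ∧ α ∈ Δ) := fun h => by omega
    simp only [if_neg hcond]
    have hsub : (0:ℝ) ≤ (d:ℝ) - (adeg α : ℝ) := by
      have : (adeg α : ℝ) ≤ (d : ℝ) := by exact_mod_cast hα.2.le
      linarith
    have hQ : 0 ≤ ∏ i, ((α i : ℝ) / z α i) ^ (α i) :=
      prod_div_nonneg fun i => (hsign α hα.1 i).1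
    apply mul_le_mul_of_nonneg_left _ hsub
    apply Real.rpow_le_rpow (mul_nonneg (hApos α hα.1).le hQ)
      (mul_le_mul_of_nonneg_right (hAw α hα.1) hQ) (by positivity)

section Final

variable {n m : ℕ} {d : ℕ} {f : MvPolynomial (Fin n) ℝ} {g : Fin m → MvPolynomial (Fin n) ℝ}

lemma eval0_polyG (f : MvPolynomial (Fin n) ℝ) (g : Fin m → MvPolynomial (Fin n) ℝ)
    (mu : Fin m → ℝ) :
    eval (0 : Fin n → ℝ) (polyG f g mu)
      = eval (0 : Fin n → ℝ) f - ∑ j, mu j * eval (0 : Fin n → ℝ) (g j) := by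
  simp [polyG]

lemma firstSum_eq
    (hg0 : ∀ k : Fin (m+1), k ≠ 0 →
      0 ≤ eval (0 : Fin n → ℝ) ((Fin.cons (-f) g : Fin (m+1) → MvPolynomial (Fin n) ℝ) k))
    (mu : Fin m → ℝ) :
    (∑ j : Fin m, mu j * max (eval (0 : Fin n → ℝ)
        (hpoly (Fin.cons (-f) g) (fun j k => if j = k then 1 else 0) j.succ)) 0)
      = ∑ j, mu j * eval (0 : Fin n → ℝ) (g j) := by
  apply Finset.sum_congr rfl
  intro j _
  rw [hpoly_id, Fin.cons_succ,
    max_eq_left (by simpa using hg0 j.succ (Fin.succ_ne_zero j))]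

theorem stmt13' (hn : 1 ≤ n)
    (hd2 : 2 ≤ d) (hde : Even d)
    (gext : Fin (m+1) → MvPolynomial (Fin n) ℝ) (hgext : gext = Fin.cons (-f) g)
    (hO : ∀ j, OmegaSet d (-(gext j)) = DelSet d (-(gext j)))
    (A : Fin (m+1) → Fin (m+1) → ℝ) (hA : A = fun j k => if j = k then 1 else 0)
    (hdisj : ∀ j k : Fin (m+1), j < k →
      DelSet d (-(gext j)) ∩ DelSet d (-(gext k)) = ∅)
    (hg0 : ∀ k : Fin (m+1), k ≠ 0 → 0 ≤ eval (0 : Fin n → ℝ) (gext k)) :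
    fAgp d gext A =
      sSup ((fun lam => lwGp d (polyG f g lam)) '' {lam : Fin m → ℝ | ∀ j, 0 < lam j}) := by
  subst hgext hA
  have hf0 : (-(eval (0 : Fin n → ℝ)
      (hpoly (Fin.cons (-f) g) (fun j k => if j = k then 1 else 0) 0)))
      = eval (0 : Fin n → ℝ) f := by
    rw [hpoly_id, Fin.cons_zero]; simp
  apply le_antisymm
  · rw [fAgp, rhoA, hf0]
    apply sub_sInf_le
    · intro t ht
      exact lw2Obj_nonneg hde ht
    · rintro ⟨z, w, mu⟩ ht
      obtain ⟨z', hz', hobj⟩ := dirA ht.1 hde hd2 hO hdisj ht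
      have hmem : lwGp d (polyG f g mu)
          ∈ (fun lam => lwGp d (polyG f g lam)) '' {lam : Fin m → ℝ | ∀ j, 0 < lam j} :=
        ⟨mu, fun j => ht.1 j, rfl⟩
      refine le_trans ?_ (le_sSup hmem)
      rw [lwGp, lwRho]
      have h1 : sInf ((fun z => ((lwObj d (polyG f g mu) z : ℝ) : EReal))
            '' {z | LwFeas d (polyG f g mu) z})
          ≤ ((lwObj d (polyG f g mu) z' : ℝ) : EReal) := sInf_le ⟨z', hz', rfl⟩
      refine le_trans ?_ (EReal.sub_le_sub (le_refl _) h1)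
      rw [← EReal.coe_sub]
      rw [EReal.coe_le_coe_iff]
      have he := eval0_polyG f g mu
      have hfs := firstSum_eq hg0 mu
      rw [lw2Obj, hfs]
      rw [he]
      linarith
  · apply sSup_le
    rintro s ⟨lam, hlam, rfl⟩
    show lwGp d (polyG f g lam) ≤ _
    rw [lwGp, lwRho, fAgp, rhoA, hf0]
    apply sub_sInf_le
    · intro zz hz
      exact lwObj_nonneg hde hz
    · intro zz hz
      obtain ⟨hfeas2, hobj2⟩ := dirB hlam hde hd2 hO hdisj hg0 hz
      have h1 : sInf ((fun t : ((Fin n →₀ ℕ) → Fin n → ℝ) × ((Fin n →₀ ℕ) → ℝ) × (Fin m → ℝ) =>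
            ((lw2Obj d (Fin.cons (-f) g) (fun j k => if j = k then 1 else 0)
              t.1 t.2.1 t.2.2 : ℝ) : EReal)) ''
            {t | Lw2Feas d (Fin.cons (-f) g) (fun j k => if j = k then 1 else 0)
              t.1 t.2.1 t.2.2})
          ≤ ((lw2Obj d (Fin.cons (-f) g) (fun j k => if j = k then 1 else 0) zz
              (fun α => |(polyG f g lam).coeff α|) lam : ℝ) : EReal) :=
        sInf_le ⟨⟨zz, fun α => |(polyG f g lam).coeff α|, lam⟩, hfeas2, rfl⟩
      refine le_trans ?_ (EReal.sub_le_sub (le_refl _) h1)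
      rw [← EReal.coe_sub, EReal.coe_le_coe_iff, hobj2, eval0_polyG]
      linarith

end Final


/-- Theorem (A = I, part 3): under (†), if moreover `Δ(−g_j) ∩ Δ(−g_k) = ∅` for `j < k` and
`g_k(0) ≥ 0` for `k = 1,…,m`, then `f^I_{gp,g} = s₀(f,g)`. -/
theorem stmt13 {n m : ℕ} (hn : 1 ≤ n) (d : ℕ)
    (f : MvPolynomial (Fin n) ℝ) (g : Fin m → MvPolynomial (Fin n) ℝ)
    (hd2 : 2 ≤ d) (hde : Even d) (hdf : f.totalDegree ≤ d)
    (hdg : ∀ j, (g j).totalDegree ≤ d)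
    (hdLeast : ∀ d' : ℕ, Even d' → 2 ≤ d' → f.totalDegree ≤ d' →
      (∀ j, (g j).totalDegree ≤ d') → d ≤ d')
    (gext : Fin (m+1) → MvPolynomial (Fin n) ℝ) (hgext : gext = Fin.cons (-f) g)
    (hO : ∀ j, OmegaSet d (-(gext j)) = DelSet d (-(gext j)))
    (hdagger : ∀ i : Fin n, ∃! k : Fin (m+1),
      (gext k).coeff (Finsupp.single i d) < 0)
    (A : Fin (m+1) → Fin (m+1) → ℝ) (hA : A = fun j k => if j = k then 1 else 0)
    (hdisj : ∀ j k : Fin (m+1), j < k →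
      DelSet d (-(gext j)) ∩ DelSet d (-(gext k)) = ∅)
    (hg0 : ∀ k : Fin (m+1), k ≠ 0 → 0 ≤ eval (0 : Fin n → ℝ) (gext k)) :
    fAgp d gext A =
      sSup ((fun lam => lwGp d (polyG f g lam)) '' {lam : Fin m → ℝ | ∀ j, 0 < lam j}) :=
  stmt13' hn hd2 hde gext hgext hO A hA hdisj hg0
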